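/- Additive empirical-cost bound: let Φ_n be an n-tuple of points in ℝ^d (columns of a d×n matrix), Π_m the orthogonal projection onto a subspace satisfying Π - Π_m ⪯ (γ/(1-ε)) (Φ_nΦ_nᵀ + γΠ)⁻¹ where Π is the orthogonal projection onto the span of the columns of Φ_n (and the inverse taken on that span). Let S_n be an orthogonal projection matrix with trace k achieving the optimal exact k-means cost W* = ‖Φ_n - Φ_n S_n‖_F². Then the optimal cost over centroids constrained to Range(Π_m), namely min over trace-k cluster projections S of ‖Φ_n - Π_m Φ_n S‖_F², is at most W* + γk/(1-ε). -/

import Mathlib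

open Matrix

/-- The cluster projection matrix `S = F R⁻¹ Fᵀ` of the partition induced by the cluster
assignment `g`: its `(i,i')` entry is `1/|C_{g i}|` if `g i = g i'` and `0` otherwise. -/
noncomputable def clusterProj {n k : ℕ} (g : Fin n → Fin k) : Matrix (Fin n) (Fin n) ℝ :=
  fun i i' => if g i = g i' then
    (1 : ℝ) / ((Finset.univ.filter (fun s => g s = g i)).card) else 0

/-- Squared Frobenius norm `‖A‖_F² = Tr(AᵀA)`. -/
noncomputable def frobSq {d n : ℕ} (A : Matrix (Fin d) (Fin n) ℝ) : ℝ := (Aᵀ * A).trace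

lemma clusterProj_transpose {n k : ℕ} (g : Fin n → Fin k) :
    (clusterProj g)ᵀ = clusterProj g := by
  ext i i'
  simp only [transpose_apply, clusterProj]
  by_cases h : g i = g i'
  · rw [if_pos h.symm, if_pos h, h]
  · rw [if_neg (fun hh => h hh.symm), if_neg h]

lemma clusterProj_idem {n k : ℕ} (g : Fin n → Fin k) :
    clusterProj g * clusterProj g = clusterProj g := by
  ext i i'
  rw [Matrix.mul_apply]
  simp only [clusterProj]
  by_cases h : g i = g i'
  · rw [if_pos h]
    have hrw : ∀ s : Fin n, (if g i = g s then
          (1 : ℝ) / ((Finset.univ.filter (fun t => g t = g i)).card) else 0) *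
        (if g s = g i' then
          (1 : ℝ) / ((Finset.univ.filter (fun t => g t = g s)).card) else 0)
        = if g s = g i then
          ((1 : ℝ) / ((Finset.univ.filter (fun t => g t = g i)).card)) *
          ((1 : ℝ) / ((Finset.univ.filter (fun t => g t = g i)).card)) else 0 := by
      intro s
      by_cases hs : g s = g i
      · rw [if_pos hs.symm, if_pos (hs.trans h), if_pos hs]
        simp only [hs]
      · rw [if_neg (fun hh => hs hh.symm), zero_mul, if_neg hs]
    rw [Finset.sum_congr rfl (fun s _ => hrw s), ← Finset.sum_filter, Finset.sum_const,
      nsmul_eq_mul]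
    have hcard : (0 : ℝ) < ((Finset.univ.filter (fun t => g t = g i)).card : ℝ) := by
      have : i ∈ Finset.univ.filter (fun t => g t = g i) := by simp
      exact_mod_cast Finset.card_pos.mpr ⟨i, this⟩
    field_simp
  · rw [if_neg h]
    apply Finset.sum_eq_zero
    intro s _
    by_cases hs : g i = g s
    · rw [if_neg (fun hh => h (hs.trans hh)), mul_zero]
    · rw [if_neg hs, zero_mul]

lemma clusterProj_trace {n k : ℕ} (g : Fin n → Fin k) (hg : ∀ j : Fin k, ∃ i, g i = j) :
    (clusterProj g).trace = k := by
  rw [Matrix.trace]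
  have h1 : ∀ i : Fin n, (clusterProj g).diag i
      = (1 : ℝ) / ((Finset.univ.filter (fun t => g t = g i)).card) := by
    intro i; simp [clusterProj, Matrix.diag]
  rw [Finset.sum_congr rfl (fun i _ => h1 i)]
  rw [← Finset.sum_fiberwise_of_maps_to (g := g) (t := Finset.univ) (fun i _ => Finset.mem_univ _)]
  have hfib : ∀ j : Fin k, (∑ i ∈ Finset.univ.filter (fun i => g i = j),
      (1 : ℝ) / ((Finset.univ.filter (fun t => g t = g i)).card)) = 1 := by
    intro j
    have hcongr : ∀ i ∈ Finset.univ.filter (fun i => g i = j),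
        (1 : ℝ) / ((Finset.univ.filter (fun t => g t = g i)).card)
        = (1 : ℝ) / ((Finset.univ.filter (fun t => g t = j)).card) := by
      intro i hi
      rw [Finset.mem_filter] at hi
      rw [hi.2]
    rw [Finset.sum_congr rfl hcongr, Finset.sum_const, nsmul_eq_mul]
    obtain ⟨i0, hi0⟩ := hg j
    have hpos : (0 : ℝ) < ((Finset.univ.filter (fun t => g t = j)).card : ℝ) := by
      exact_mod_cast Finset.card_pos.mpr ⟨i0, by simp [hi0]⟩
    field_simp
  rw [Finset.sum_congr rfl (fun j _ => hfib j)]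
  simp

lemma frobSq_nonneg {d n : ℕ} (A : Matrix (Fin d) (Fin n) ℝ) : 0 ≤ frobSq A := by
  unfold frobSq
  rw [Matrix.trace]
  apply Finset.sum_nonneg
  intro i _
  simp only [Matrix.diag, Matrix.mul_apply, transpose_apply]
  exact Finset.sum_nonneg fun j _ => mul_self_nonneg _

lemma frobSq_add {d n : ℕ} (A B : Matrix (Fin d) (Fin n) ℝ) :
    frobSq (A + B) = frobSq A + frobSq B + (Aᵀ * B).trace + (Bᵀ * A).trace := by
  unfold frobSq
  rw [transpose_add, Matrix.add_mul, Matrix.mul_add, Matrix.mul_add, trace_add, trace_add,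
    trace_add]
  ring

lemma trace_nonneg_of_psd {m : ℕ} {M : Matrix (Fin m) (Fin m) ℝ} (h : M.PosSemidef) :
    0 ≤ M.trace := by
  rw [Matrix.trace]
  apply Finset.sum_nonneg
  intro i _
  have := h.dotProduct_mulVec_nonneg (Pi.single i 1)
  simpa [Matrix.mulVec, dotProduct, Pi.single_apply, Matrix.diag] using this

lemma psd_smul {m : ℕ} {M : Matrix (Fin m) (Fin m) ℝ} (h : M.PosSemidef) {c : ℝ} (hc : 0 ≤ c) :
    (c • M).PosSemidef := by
  refine Matrix.PosSemidef.of_dotProduct_mulVec_nonneg ?_ (fun x => ?_)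
  · rw [Matrix.IsHermitian, conjTranspose_smul, h.1]
    simp
  · rw [Matrix.smul_mulVec, dotProduct_smul]
    exact smul_nonneg hc (h.dotProduct_mulVec_nonneg x)

lemma psd_transpose_mul_self {m l : ℕ} (A : Matrix (Fin m) (Fin l) ℝ) :
    (Aᵀ * A).PosSemidef := by
  have := Matrix.posSemidef_conjTranspose_mul_self A
  rwa [conjTranspose_eq_transpose_of_trivial] at this

lemma psd_conj {m l : ℕ} {M : Matrix (Fin m) (Fin m) ℝ} (h : M.PosSemidef)
    (B : Matrix (Fin m) (Fin l) ℝ) : (Bᵀ * M * B).PosSemidef := by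
  have := h.conjTranspose_mul_mul_same B
  rwa [conjTranspose_eq_transpose_of_trivial] at this

/-- Additive empirical-cost bound: if the dictionary is `γ`-preserving, i.e.
`Proj - ProjM ⪯ (γ/(1-ε))(ΦΦᵀ + γProj)⁻¹` (inverse `J` taken on the range of `Proj`), and `S_n` is the
cluster projection achieving the optimal exact k-means cost `W* = ‖Φ - Φ S_n‖_F²`, then the
optimal cost with centroids constrained to `Range(ProjM)` is at most `W* + γk/(1-ε)`. -/
theorem stmt15 {d n k : ℕ} (Φ : Matrix (Fin d) (Fin n) ℝ) (γ ε : ℝ)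
    (hγ : 0 < γ) (hε : ε ∈ Set.Ioo (0 : ℝ) 1)
    (P : Matrix (Fin d) (Fin d) ℝ)
    (hP1 : Φ * Φᵀ * P * (Φ * Φᵀ) = Φ * Φᵀ)
    (hP2 : P * (Φ * Φᵀ) * P = P)
    (hP3 : (Φ * Φᵀ * P)ᵀ = Φ * Φᵀ * P)
    (hP4 : (P * (Φ * Φᵀ))ᵀ = P * (Φ * Φᵀ))
    (Proj : Matrix (Fin d) (Fin d) ℝ) (hProj : Proj = Φ * Φᵀ * P)
    (ProjM : Matrix (Fin d) (Fin d) ℝ)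
    (hProjM1 : ProjM * ProjM = ProjM) (hProjM2 : ProjMᵀ = ProjM) (hProjMProj : Proj * ProjM = ProjM)
    -- `J` is the inverse of `ΦΦᵀ + γProj` on the range of `Proj`
    (J : Matrix (Fin d) (Fin d) ℝ)
    (hJ1 : (Φ * Φᵀ + γ • Proj) * J = Proj) (hJ2 : J * (Φ * Φᵀ + γ • Proj) = Proj)
    (hJ3 : Proj * J * Proj = J)
    -- the `γ`-preserving dictionary condition `Proj - ProjM ⪯ (γ/(1-ε)) J`
    (hdict : ((γ / (1 - ε)) • J - (Proj - ProjM)).PosSemidef)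
    -- `S_n = clusterProj gn` achieves the optimal exact k-means cost
    (gn : Fin n → Fin k) (hgn : ∀ j : Fin k, ∃ i, gn i = j)
    (hopt : ∀ g : Fin n → Fin k, (∀ j : Fin k, ∃ i, g i = j) →
      frobSq (Φ - Φ * clusterProj gn) ≤ frobSq (Φ - Φ * clusterProj g)) :
    sInf {x : ℝ | ∃ g : Fin n → Fin k, (∀ j : Fin k, ∃ i, g i = j) ∧
        x = frobSq (Φ - ProjM * Φ * clusterProj g)}
      ≤ frobSq (Φ - Φ * clusterProj gn) + γ * k / (1 - ε) := by
  have hone : (0 : ℝ) < 1 - ε := by linarith [hε.2]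
  set c : ℝ := γ / (1 - ε) with hcdef
  have hc : 0 < c := div_pos hγ hone
  -- basic projection facts
  have hPsiT : (Φ * Φᵀ)ᵀ = Φ * Φᵀ := by rw [transpose_mul, transpose_transpose]
  have hProjT : Projᵀ = Proj := by rw [hProj]; exact hP3
  have hProjIdem : Proj * Proj = Proj := by
    rw [hProj, show Φ * Φᵀ * P * (Φ * Φᵀ * P) = Φ * Φᵀ * P * (Φ * Φᵀ) * P by
      simp only [Matrix.mul_assoc], hP1]
  have hProjPsi : Proj * (Φ * Φᵀ) = Φ * Φᵀ := by rw [hProj]; exact hP1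
  have hPsiProj : (Φ * Φᵀ) * Proj = Φ * Φᵀ := by
    have := congrArg Matrix.transpose hProjPsi
    rwa [transpose_mul, hProjT, hPsiT] at this
  have hProjPhi : Proj * Φ = Φ := by
    have hz : (Proj * Φ - Φ) * (Proj * Φ - Φ)ᵀ = 0 := by
      rw [transpose_sub, transpose_mul, hProjT]
      rw [Matrix.sub_mul, Matrix.mul_sub, Matrix.mul_sub]
      rw [show Proj * Φ * (Φᵀ * Proj) = Proj * ((Φ * Φᵀ) * Proj) by
        simp only [Matrix.mul_assoc]]
      rw [hPsiProj, hProjPsi]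
      rw [show Proj * Φ * Φᵀ = Proj * (Φ * Φᵀ) by simp only [Matrix.mul_assoc]]
      rw [hProjPsi]
      rw [show Φ * (Φᵀ * Proj) = (Φ * Φᵀ) * Proj by simp only [Matrix.mul_assoc]]
      rw [hPsiProj]
      simp
    have := (Matrix.self_mul_conjTranspose_eq_zero (A := Proj * Φ - Φ))
    rw [conjTranspose_eq_transpose_of_trivial] at this
    exact sub_eq_zero.mp (this.mp hz)
  have hPhiTProj : Φᵀ * Proj = Φᵀ := by
    have := congrArg Matrix.transpose hProjPhi
    rwa [transpose_mul, hProjT] at this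
  -- J facts
  have hProjJ : Proj * J = J := by
    conv_lhs => rw [← hJ3]
    rw [show Proj * (Proj * J * Proj) = (Proj * Proj) * J * Proj by
      simp only [Matrix.mul_assoc], hProjIdem, hJ3]
  have hJProj : J * Proj = J := by
    conv_lhs => rw [← hJ3]
    rw [show Proj * J * Proj * Proj = Proj * J * (Proj * Proj) by
      simp only [Matrix.mul_assoc], hProjIdem, hJ3]
  have hMT : (Φ * Φᵀ + γ • Proj)ᵀ = Φ * Φᵀ + γ • Proj := by
    rw [transpose_add, hPsiT, transpose_smul, hProjT]
  have hJT : Jᵀ = J := by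
    have h1 : (Φ * Φᵀ + γ • Proj) * Jᵀ = Proj := by
      have := congrArg Matrix.transpose hJ2
      rwa [transpose_mul, hMT, hProjT] at this
    have h2 : Proj * Jᵀ = Jᵀ := by
      have h3 := congrArg Matrix.transpose hJ3
      rw [transpose_mul, transpose_mul, hProjT] at h3
      calc Proj * Jᵀ = Proj * (Proj * (Jᵀ * Proj)) := by rw [h3]
        _ = (Proj * Proj) * (Jᵀ * Proj) := by simp only [Matrix.mul_assoc]
        _ = Proj * (Jᵀ * Proj) := by rw [hProjIdem]
        _ = Jᵀ := h3
    calc Jᵀ = Proj * Jᵀ := h2.symm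
      _ = (J * (Φ * Φᵀ + γ • Proj)) * Jᵀ := by rw [hJ2]
      _ = J * ((Φ * Φᵀ + γ • Proj) * Jᵀ) := by rw [Matrix.mul_assoc]
      _ = J * Proj := by rw [h1]
      _ = J := hJProj
  -- the key PSD fact : 1 - ΦᵀJΦ ⪰ 0
  have hmid : J * (Φ * Φᵀ) * J = J - γ • (J * J) := by
    have hsplit : (Φ * Φᵀ) = (Φ * Φᵀ + γ • Proj) - γ • Proj := by abel
    calc J * (Φ * Φᵀ) * J = (J * (Φ * Φᵀ + γ • Proj) - J * (γ • Proj)) * J := by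
          rw [← Matrix.mul_sub, ← hsplit]
      _ = (Proj - γ • J) * J := by rw [hJ2, Matrix.mul_smul, hJProj]
      _ = J - γ • (J * J) := by rw [Matrix.sub_mul, hProjJ, Matrix.smul_mul]
  have hA2 : (Φᵀ * J * Φ) * (Φᵀ * J * Φ) = Φᵀ * J * Φ - γ • (Φᵀ * (J * J) * Φ) := by
    calc (Φᵀ * J * Φ) * (Φᵀ * J * Φ) = Φᵀ * (J * (Φ * Φᵀ) * J) * Φ := by
          simp only [Matrix.mul_assoc]
      _ = Φᵀ * (J - γ • (J * J)) * Φ := by rw [hmid]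
      _ = Φᵀ * J * Φ - γ • (Φᵀ * (J * J) * Φ) := by
          rw [Matrix.mul_sub, Matrix.mul_smul, Matrix.sub_mul, Matrix.smul_mul]
  have hAT : (Φᵀ * J * Φ)ᵀ = Φᵀ * J * Φ := by
    rw [transpose_mul, transpose_mul, transpose_transpose, hJT, Matrix.mul_assoc]
  have hKeyId : (1 - Φᵀ * J * Φ : Matrix (Fin n) (Fin n) ℝ)
      = (1 - Φᵀ * J * Φ)ᵀ * (1 - Φᵀ * J * Φ) + γ • ((J * Φ)ᵀ * (J * Φ)) := by
    have hJPhi : (J * Φ)ᵀ * (J * Φ) = Φᵀ * (J * J) * Φ := by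
      rw [transpose_mul, hJT]
      simp only [Matrix.mul_assoc]
    rw [transpose_sub, transpose_one, hAT, hJPhi]
    simp only [Matrix.sub_mul, Matrix.mul_sub, Matrix.one_mul, Matrix.mul_one]
    rw [hA2]
    abel
  have hPSDkey : (1 - Φᵀ * J * Φ : Matrix (Fin n) (Fin n) ℝ).PosSemidef := by
    rw [hKeyId]
    exact (psd_transpose_mul_self _).add (psd_smul (psd_transpose_mul_self _) hγ.le)
  -- c•1 - Φᵀ(Proj - ProjM)Φ ⪰ 0
  have hPSD1 : ((c • (1 : Matrix (Fin n) (Fin n) ℝ)) - Φᵀ * (Proj - ProjM) * Φ).PosSemidef := by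
    have hid : (c • (1 : Matrix (Fin n) (Fin n) ℝ)) - Φᵀ * (Proj - ProjM) * Φ
        = Φᵀ * (c • J - (Proj - ProjM)) * Φ + c • (1 - Φᵀ * J * Φ) := by
      simp only [Matrix.mul_sub, Matrix.sub_mul, Matrix.mul_smul, Matrix.smul_mul, smul_sub]
      abel
    rw [hid]
    exact (psd_conj hdict Φ).add (psd_smul hPSDkey hc.le)
  -- the cluster projection
  set T : Matrix (Fin n) (Fin n) ℝ := clusterProj gn with hTdef
  have hTT : Tᵀ = T := clusterProj_transpose gn
  have hTidem : T * T = T := clusterProj_idem gn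
  have hTtr : T.trace = k := clusterProj_trace gn hgn
  -- the decomposition
  have hsplit : Φ - ProjM * Φ * T = (Φ - Φ * T) + (1 - ProjM) * (Φ * T) := by
    rw [Matrix.sub_mul, Matrix.one_mul, ← Matrix.mul_assoc]
    abel
  have hAform : Φ - Φ * T = Φ * (1 - T) := by
    rw [Matrix.mul_sub, Matrix.mul_one]
  have hcross : ((Φ - Φ * T)ᵀ * ((1 - ProjM) * (Φ * T))).trace = 0 := by
    rw [hAform, transpose_mul, transpose_sub, transpose_one, hTT]
    rw [show (1 - T) * Φᵀ * ((1 - ProjM) * (Φ * T))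
        = ((1 - T) * (Φᵀ * ((1 - ProjM) * Φ))) * T by simp only [Matrix.mul_assoc]]
    rw [Matrix.trace_mul_comm]
    rw [show T * ((1 - T) * (Φᵀ * ((1 - ProjM) * Φ)))
        = (T * (1 - T)) * (Φᵀ * ((1 - ProjM) * Φ)) by simp only [Matrix.mul_assoc]]
    have : T * (1 - T) = 0 := by rw [Matrix.mul_sub, Matrix.mul_one, hTidem, sub_self]
    rw [this, Matrix.zero_mul, trace_zero]
  have hcross' : (((1 - ProjM) * (Φ * T))ᵀ * (Φ - Φ * T)).trace = 0 := by
    rw [← trace_transpose, transpose_mul, transpose_transpose, hcross]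
  -- the squared norm of the correction term
  have h1m : (1 - ProjM : Matrix (Fin d) (Fin d) ℝ)ᵀ = 1 - ProjM := by
    rw [transpose_sub, transpose_one, hProjM2]
  have h1mIdem : (1 - ProjM : Matrix (Fin d) (Fin d) ℝ) * (1 - ProjM) = 1 - ProjM := by
    simp only [Matrix.mul_sub, Matrix.sub_mul, Matrix.mul_one, Matrix.one_mul, hProjM1]
    abel
  have hProjPhiM : (1 - ProjM) * Φ = (Proj - ProjM) * Φ := by
    rw [Matrix.sub_mul, Matrix.sub_mul, Matrix.one_mul, hProjPhi]
  have hBsq : frobSq ((1 - ProjM) * (Φ * T)) = (T * (Φᵀ * (Proj - ProjM) * Φ) * T).trace := by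
    unfold frobSq
    congr 1
    rw [transpose_mul, transpose_mul, h1m, hTT]
    calc T * Φᵀ * (1 - ProjM) * ((1 - ProjM) * (Φ * T))
        = T * (Φᵀ * (((1 - ProjM) * (1 - ProjM)) * Φ)) * T := by simp only [Matrix.mul_assoc]
      _ = T * (Φᵀ * ((1 - ProjM) * Φ)) * T := by rw [h1mIdem]
      _ = T * (Φᵀ * ((Proj - ProjM) * Φ)) * T := by rw [hProjPhiM]
      _ = T * (Φᵀ * (Proj - ProjM) * Φ) * T := by simp only [Matrix.mul_assoc]
  -- trace bound
  have hbound : (T * (Φᵀ * (Proj - ProjM) * Φ) * T).trace ≤ c * k := by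
    have hpsd := psd_conj hPSD1 T
    rw [hTT] at hpsd
    have htr := trace_nonneg_of_psd hpsd
    have hexp : T * ((c • (1 : Matrix (Fin n) (Fin n) ℝ)) - Φᵀ * (Proj - ProjM) * Φ) * T
        = c • T - T * (Φᵀ * (Proj - ProjM) * Φ) * T := by
      rw [Matrix.mul_sub, Matrix.sub_mul, Matrix.mul_smul, Matrix.mul_one, Matrix.smul_mul,
        hTidem]
    rw [hexp, trace_sub, trace_smul, hTtr] at htr
    simp only [smul_eq_mul] at htr
    linarith
  -- the main estimate
  have hkey : frobSq (Φ - ProjM * Φ * T) ≤ frobSq (Φ - Φ * T) + c * k := by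
    rw [hsplit, frobSq_add, hcross, hcross', hBsq]
    linarith [hbound]
  -- conclude via the infimum
  have hbdd : BddBelow {x : ℝ | ∃ g : Fin n → Fin k, (∀ j : Fin k, ∃ i, g i = j) ∧
      x = frobSq (Φ - ProjM * Φ * clusterProj g)} := by
    refine ⟨0, fun x hx => ?_⟩
    obtain ⟨g, _, rfl⟩ := hx
    exact frobSq_nonneg _
  have hmem : frobSq (Φ - ProjM * Φ * clusterProj gn) ∈ {x : ℝ | ∃ g : Fin n → Fin k,
      (∀ j : Fin k, ∃ i, g i = j) ∧ x = frobSq (Φ - ProjM * Φ * clusterProj g)} :=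
    ⟨gn, hgn, rfl⟩
  calc sInf {x : ℝ | ∃ g : Fin n → Fin k, (∀ j : Fin k, ∃ i, g i = j) ∧
        x = frobSq (Φ - ProjM * Φ * clusterProj g)}
      ≤ frobSq (Φ - ProjM * Φ * T) := csInf_le hbdd hmem
    _ ≤ frobSq (Φ - Φ * T) + c * k := hkey
    _ = frobSq (Φ - Φ * clusterProj gn) + γ * k / (1 - ε) := by
        rw [hTdef, hcdef]; ring
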